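/- Let H be as in the context (a real vector space with a symmetric bilinear form φ of signature (p,·)). Let P and P′ be two p-dimensional subspaces of H on which φ is positive definite, with bases x = (x₁,…,xₚ) and x′ = (x′₁,…,x′ₚ) respectively. Then for every linear automorphism g of H preserving φ, the sign of G(g·x, x) equals the sign of G(g·x′, x′); that is, the orientation homomorphism does not depend on the choice of the positive definite p-dimensional subspace and of its basis. -/

import Mathlib

open Submodule Matrix Set


section Aux

variable {H : Type*} [AddCommGroup H] [Module ℝ H]

private lemma sign_sq_mul (r a : ℝ) (hr : r ≠ 0) :
    Real.sign (r ^ 2 * a) = Real.sign a := by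
  have h : 0 < r ^ 2 := by positivity
  rcases lt_trichotomy a 0 with h' | h' | h'
  · rw [Real.sign_of_neg h', Real.sign_of_neg (by nlinarith)]
  · simp [h']
  · rw [Real.sign_of_pos h', Real.sign_of_pos (by nlinarith)]

/-- Cauchy–Schwarz for a negative semidefinite subspace. -/
private lemma cs_neg (φ : LinearMap.BilinForm ℝ H) (hsymm : ∀ u v, φ u v = φ v u)
    (N : Submodule ℝ H) (hneg : ∀ v ∈ N, v ≠ 0 → φ v v < 0)
    {b b' : H} (hb : b ∈ N) (hb' : b' ∈ N) :
    (φ b b') ^ 2 ≤ (φ b b) * (φ b' b') := by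
  by_cases h0 : b' = 0
  · simp [h0]
  have hc : φ b' b' < 0 := hneg b' hb' h0
  have hm : (φ b' b') • b + (-(φ b b')) • b' ∈ N := N.add_mem (N.smul_mem _ hb) (N.smul_mem _ hb')
  have key : φ ((φ b' b') • b + (-(φ b b')) • b') ((φ b' b') • b + (-(φ b b')) • b') ≤ 0 := by
    rcases eq_or_ne ((φ b' b') • b + (-(φ b b')) • b') 0 with h | h
    · rw [h]; simp
    · exact (hneg _ hm h).le
  have hexp : φ ((φ b' b') • b + (-(φ b b')) • b') ((φ b' b') • b + (-(φ b b')) • b')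
      = (φ b' b') ^ 2 * φ b b - 2 * (φ b' b') * (φ b b') ^ 2 + (φ b b') ^ 2 * (φ b' b') := by
    simp only [map_add, _root_.map_smul, LinearMap.add_apply, LinearMap.smul_apply, smul_eq_mul]
    rw [hsymm b' b]
    ring
  rw [hexp] at key
  nlinarith [key, hc, sq_nonneg (φ b b')]

end Aux


section Aux2

variable {H : Type*} [AddCommGroup H] [Module ℝ H]

private lemma maxdim (φ : LinearMap.BilinForm ℝ H) (p : ℕ) (hp : 1 ≤ p)
    (Hplus Hminus : Submodule ℝ H) (hcompl : IsCompl Hplus Hminus)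
    (hplusdim : Module.finrank ℝ Hplus = p)
    (hnegdef : ∀ v ∈ Hminus, v ≠ 0 → φ v v < 0)
    {m : ℕ} (z : Fin m → H) (hz : LinearIndependent ℝ z)
    (hpos : ∀ v ∈ Submodule.span ℝ (Set.range z), v ≠ 0 → 0 < φ v v) :
    m ≤ p := by
  haveI : FiniteDimensional ℝ Hplus := .of_finrank_pos (by omega)
  set π := Submodule.linearProjOfIsCompl Hplus Hminus hcompl with hπ
  have hli : LinearIndependent ℝ (fun i => π (z i)) := by
    rw [Fintype.linearIndependent_iff]
    intro c hc
    have hv : π (∑ i, c i • z i) = 0 := by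
      rw [map_sum]
      simpa [_root_.map_smul] using hc
    have hmem : (∑ i, c i • z i) ∈ Hminus :=
      (Submodule.linearProjOfIsCompl_apply_eq_zero_iff hcompl).1 hv
    have hzero : (∑ i, c i • z i) = 0 := by
      by_contra h
      have h1 := hpos _ (Submodule.sum_smul_mem _ c
        (fun i _ => Submodule.subset_span (Set.mem_range_self i))) h
      exact absurd (hnegdef _ hmem h) (by linarith)
    exact Fintype.linearIndependent_iff.1 hz c hzero
  have hcard := hli.fintype_card_le_finrank
  simpa [hplusdim] using hcard

private lemma detne (φ : LinearMap.BilinForm ℝ H) (hsymm : ∀ u v, φ u v = φ v u)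
    (p : ℕ) (hp : 1 ≤ p)
    (Hplus Hminus : Submodule ℝ H) (hcompl : IsCompl Hplus Hminus)
    (hplusdim : Module.finrank ℝ Hplus = p)
    (hnegdef : ∀ v ∈ Hminus, v ≠ 0 → φ v v < 0)
    (u w : Fin p → H) (hu : LinearIndependent ℝ u) (hw : LinearIndependent ℝ w)
    (hupos : ∀ v ∈ Submodule.span ℝ (Set.range u), v ≠ 0 → 0 < φ v v)
    (hwpos : ∀ v ∈ Submodule.span ℝ (Set.range w), v ≠ 0 → 0 < φ v v) :
    (Matrix.of fun i j => φ (u i) (w j)).det ≠ 0 := by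
  intro hdet
  obtain ⟨c, hc0, hc⟩ := Matrix.exists_mulVec_eq_zero_iff.2 hdet
  set v₀ := ∑ j, c j • w j with hv₀
  have hv₀mem : v₀ ∈ Submodule.span ℝ (Set.range w) :=
    Submodule.sum_smul_mem _ c (fun i _ => Submodule.subset_span (Set.mem_range_self i))
  have hv₀ne : v₀ ≠ 0 := by
    intro h
    exact hc0 (funext (Fintype.linearIndependent_iff.1 hw c h))
  have horthu : ∀ i, φ (u i) v₀ = 0 := by
    intro i
    have h1 := congrFun hc i
    simpa [Matrix.mulVec, dotProduct, hv₀, map_sum, _root_.map_smul, smul_eq_mul,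
      mul_comm] using h1
  have horthspan : ∀ a ∈ Submodule.span ℝ (Set.range u), φ a v₀ = 0 := by
    intro a ha
    have hle : Submodule.span ℝ (Set.range u) ≤ LinearMap.ker (φ.flip v₀) := by
      rw [Submodule.span_le]
      rintro _ ⟨i, rfl⟩
      simpa using horthu i
    simpa using hle ha
  have hv₀pos : 0 < φ v₀ v₀ := hwpos _ hv₀mem hv₀ne
  have hnotmem : v₀ ∉ Submodule.span ℝ (Set.range u) := by
    intro h
    exact absurd (horthspan v₀ h) (ne_of_gt hv₀pos)
  have hsnoc : LinearIndependent ℝ (Fin.snoc u v₀ : Fin (p+1) → H) :=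
    linearIndependent_fin_snoc.2 ⟨hu, hnotmem⟩
  have hrange : Set.range (Fin.snoc u v₀ : Fin (p+1) → H) ⊆ insert v₀ (Set.range u) := by
    rintro _ ⟨i, rfl⟩
    induction i using Fin.lastCases with
    | last => simp
    | cast i => simp [Fin.snoc_castSucc]
  have hspos : ∀ v ∈ Submodule.span ℝ (Set.range (Fin.snoc u v₀ : Fin (p+1) → H)),
      v ≠ 0 → 0 < φ v v := by
    intro v hv hvne
    have hv' : v ∈ Submodule.span ℝ (insert v₀ (Set.range u)) :=
      Submodule.span_mono hrange hv
    obtain ⟨s, a, ha, rfl⟩ := Submodule.mem_span_insert.1 hv'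
    have h1 : φ a v₀ = 0 := horthspan a ha
    have h2 : φ v₀ a = 0 := by rw [hsymm]; exact h1
    have hexp : φ (s • v₀ + a) (s • v₀ + a) = s ^ 2 * φ v₀ v₀ + φ a a := by
      simp only [map_add, _root_.map_smul, LinearMap.add_apply, LinearMap.smul_apply,
        smul_eq_mul, h1, h2]
      ring
    rw [hexp]
    rcases eq_or_ne a 0 with rfl | hane
    · have hs : s ≠ 0 := by
        intro h
        apply hvne
        simp [h]
      have : 0 < s ^ 2 := by positivity
      simp only [map_zero, LinearMap.zero_apply, add_zero]
      positivity
    · have h3 : 0 < φ a a := hupos a ha hane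
      nlinarith [sq_nonneg s, hv₀pos]
  have := maxdim φ p hp Hplus Hminus hcompl hplusdim hnegdef _ hsnoc hspos
  omega

private lemma sign_eq_of_cont (f : ℝ → ℝ) (hf : Continuous f)
    (hne : ∀ t ∈ Set.Icc (0:ℝ) 1, f t ≠ 0) : Real.sign (f 0) = Real.sign (f 1) := by
  have h0 := hne 0 (by norm_num)
  have h1 := hne 1 (by norm_num)
  have key : ∀ a b : ℝ, f a < 0 → 0 < f b → (0:ℝ) ∈ Set.uIcc (f a) (f b) := by
    intro a b ha hb
    exact Set.mem_uIcc.2 (Or.inl ⟨ha.le, hb.le⟩)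
  rcases lt_trichotomy (f 0) 0 with ha | ha | ha
  · rcases lt_trichotomy (f 1) 0 with hb | hb | hb
    · rw [Real.sign_of_neg ha, Real.sign_of_neg hb]
    · exact absurd hb h1
    · obtain ⟨t, ht, hft⟩ := intermediate_value_uIcc hf.continuousOn (key 0 1 ha hb)
      rw [Set.uIcc_of_le (zero_le_one)] at ht
      exact absurd hft (hne t ht)
  · exact absurd ha h0
  · rcases lt_trichotomy (f 1) 0 with hb | hb | hb
    · obtain ⟨t, ht, hft⟩ := intermediate_value_uIcc hf.continuousOn (key 1 0 hb ha)
      rw [Set.uIcc_comm, Set.uIcc_of_le (zero_le_one)] at ht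
      exact absurd hft (hne t ht)
    · exact absurd hb h1
    · rw [Real.sign_of_pos ha, Real.sign_of_pos hb]

end Aux2


section Aux3
variable {H : Type*} [AddCommGroup H] [Module ℝ H]

private lemma sign_sq_mul2 (r a : ℝ) (hr : r ≠ 0) :
    Real.sign (r ^ 2 * a) = Real.sign a := by
  have h : 0 < r ^ 2 := by positivity
  rcases lt_trichotomy a 0 with h' | h' | h'
  · rw [Real.sign_of_neg h', Real.sign_of_neg (by nlinarith)]
  · simp [h']
  · rw [Real.sign_of_pos h', Real.sign_of_pos (by nlinarith)]

private lemma sign_change (φ : LinearMap.BilinForm ℝ H) (g : H ≃ₗ[ℝ] H) {p : ℕ}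
    (x xh : Fin p → H) (hxhli : LinearIndependent ℝ xh)
    (hsub : ∀ i, xh i ∈ Submodule.span ℝ (Set.range x)) :
    Real.sign (Matrix.of fun i j => φ (g (xh i)) (xh j)).det =
      Real.sign (Matrix.of fun i j => φ (g (x i)) (x j)).det := by
  classical
  choose C hC using fun i => (mem_span_range_iff_exists_fun ℝ).1 (hsub i)
  set M : Matrix (Fin p) (Fin p) ℝ := Matrix.of fun i j => φ (g (x i)) (x j) with hM
  set Cm : Matrix (Fin p) (Fin p) ℝ := Matrix.of C with hCm
  have hMh : (Matrix.of fun i j => φ (g (xh i)) (xh j)) = Cm * M * Cmᵀ := by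
    ext i j
    show φ (g (xh i)) (xh j) = _
    rw [← hC i, ← hC j]
    simp only [Matrix.of_apply, Matrix.mul_apply, Matrix.transpose_apply, hM, hCm,
      map_sum, _root_.map_smul, LinearMap.sum_apply, LinearMap.smul_apply, smul_eq_mul,
      Finset.sum_mul, Finset.mul_sum]
    apply Finset.sum_congr rfl
    intro k _
    apply Finset.sum_congr rfl
    intro l _
    ring
  have hdetC : Cm.det ≠ 0 := by
    intro h
    obtain ⟨c, hc0, hc⟩ := Matrix.exists_vecMul_eq_zero_iff.2 h
    apply hc0
    have hck : ∀ k, ∑ i, c i * C i k = 0 := by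
      intro k
      have := congrFun hc k
      simpa [Matrix.vecMul, dotProduct, hCm] using this
    have hzero : ∑ i, c i • xh i = 0 := by
      have e1 : ∑ i, c i • xh i = ∑ k, (∑ i, c i * C i k) • x k := by
        simp_rw [← hC, Finset.smul_sum, smul_smul]
        rw [Finset.sum_comm]
        simp [Finset.sum_smul]
      rw [e1]
      simp [hck]
    exact funext (Fintype.linearIndependent_iff.1 hxhli c hzero)
  rw [hMh, Matrix.det_mul, Matrix.det_mul, Matrix.det_transpose]
  have e2 : Cm.det * M.det * Cm.det = Cm.det ^ 2 * M.det := by ring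
  rw [e2]
  exact sign_sq_mul2 _ _ hdetC

end Aux3


section Main

set_option maxHeartbeats 2000000 in
/-- With `H`, `φ` of signature `(p,·)` as in the context, let `P`, `P′` be
`p`-dimensional subspaces on which `φ` is positive definite, with respective bases `x`, `x′`.
Then for every `φ`-preserving linear automorphism `g` of `H`, the sign of `G(g·x, x)` equals
the sign of `G(g·x′, x′)`: the orientation homomorphism does not depend on the choice of the
positive definite `p`-dimensional subspace and of its basis. -/
theorem stmt_3 {H : Type*} [AddCommGroup H] [Module ℝ H]
    (φ : LinearMap.BilinForm ℝ H) (hφsymm : ∀ u v, φ u v = φ v u)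
    (p : ℕ) (hp : 1 ≤ p)
    (Hplus Hminus : Submodule ℝ H) (hcompl : IsCompl Hplus Hminus)
    (horth : ∀ u ∈ Hplus, ∀ v ∈ Hminus, φ u v = 0)
    (hposdef : ∀ u ∈ Hplus, u ≠ 0 → 0 < φ u u)
    (hplusdim : Module.finrank ℝ Hplus = p)
    (hnegdef : ∀ v ∈ Hminus, v ≠ 0 → φ v v < 0)
    (P P' : Submodule ℝ H)
    (hPdim : Module.finrank ℝ P = p) (hP'dim : Module.finrank ℝ P' = p)
    (hPpos : ∀ v ∈ P, v ≠ 0 → 0 < φ v v)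
    (hP'pos : ∀ v ∈ P', v ≠ 0 → 0 < φ v v)
    (x x' : Fin p → H)
    (hxli : LinearIndependent ℝ x) (hxspan : Submodule.span ℝ (Set.range x) = P)
    (hx'li : LinearIndependent ℝ x') (hx'span : Submodule.span ℝ (Set.range x') = P')
    (g : H ≃ₗ[ℝ] H) (hg : ∀ u v, φ (g u) (g v) = φ u v) :
    Real.sign (Matrix.det (Matrix.of fun i j => φ (g (x i)) (x j))) =
      Real.sign (Matrix.det (Matrix.of fun i j => φ (g (x' i)) (x' j))) := by
  classical
  haveI : FiniteDimensional ℝ Hplus := .of_finrank_pos (by omega)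
  set π := Submodule.linearProjOfIsCompl Hplus Hminus hcompl with hπdef
  let e : Module.Basis (Fin p) ℝ Hplus := Module.finBasisOfFinrankEq ℝ Hplus hplusdim
  set E : Fin p → H := fun i => (e i : H) with hE
  have hEplus : ∀ i, E i ∈ Hplus := fun i => (e i).2
  have hEli : LinearIndependent ℝ E := by
    have := e.linearIndependent
    exact this.map' Hplus.subtype (Submodule.ker_subtype Hplus)
  -- graph construction
  have hgraph : ∀ (Q : Submodule ℝ H), Module.finrank ℝ Q = p →
      (∀ v ∈ Q, v ≠ 0 → 0 < φ v v) →
      ∃ w : Fin p → H, (∀ i, w i ∈ Hminus) ∧ (∀ i, E i + w i ∈ Q) := by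
    intro Q hQdim hQpos
    haveI : FiniteDimensional ℝ Q := .of_finrank_pos (by omega)
    set πQ : Q →ₗ[ℝ] Hplus := π.comp Q.subtype with hπQ
    have hinj : Function.Injective πQ := by
      rw [← LinearMap.ker_eq_bot, Submodule.eq_bot_iff]
      intro v hv
      have h1 : π (v : H) = 0 := hv
      have h2 : (v : H) ∈ Hminus :=
        (Submodule.linearProjOfIsCompl_apply_eq_zero_iff hcompl).1 h1
      have h3 : (v : H) = 0 := by
        by_contra hne
        exact absurd (hnegdef _ h2 hne) (by linarith [hQpos _ v.2 hne])
      exact Subtype.ext h3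
    have hsurj : Function.Surjective πQ :=
      (LinearMap.injective_iff_surjective_of_finrank_eq_finrank
        (by rw [hQdim, hplusdim])).1 hinj
    refine ⟨fun i => ((hsurj (e i)).choose : H) - E i, fun i => ?_, fun i => ?_⟩
    · have hspec : πQ (hsurj (e i)).choose = e i := (hsurj (e i)).choose_spec
      have h1 : π ((hsurj (e i)).choose : H) = e i := hspec
      have h2 : π (E i) = e i :=
        Submodule.linearProjOfIsCompl_apply_left hcompl (e i)
      have : π (((hsurj (e i)).choose : H) - E i) = 0 := by
        rw [map_sub, h1, h2, sub_self]
      exact (Submodule.linearProjOfIsCompl_apply_eq_zero_iff hcompl).1 this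
    · have : E i + (((hsurj (e i)).choose : H) - E i) = ((hsurj (e i)).choose : H) := by
        abel
      rw [this]
      exact (hsurj (e i)).choose.2
  obtain ⟨w, hwm, hwP⟩ := hgraph P hPdim hPpos
  obtain ⟨w', hw'm, hw'P⟩ := hgraph P' hP'dim hP'pos
  -- path of tuples
  set Y : ℝ → Fin p → H := fun t i => E i + ((1 - t) • w i + t • w' i) with hYdef
  have hπY : ∀ t i, π (Y t i) = e i := by
    intro t i
    have h1 : π (E i) = e i := Submodule.linearProjOfIsCompl_apply_left hcompl (e i)
    have h2 : π (w i) = 0 := (Submodule.linearProjOfIsCompl_apply_eq_zero_iff hcompl).2 (hwm i)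
    have h3 : π (w' i) = 0 := (Submodule.linearProjOfIsCompl_apply_eq_zero_iff hcompl).2 (hw'm i)
    simp [hYdef, map_add, _root_.map_smul, h1, h2, h3]
  have hYli : ∀ t, LinearIndependent ℝ (Y t) := by
    intro t
    apply LinearIndependent.of_comp π
    have : (⇑π ∘ Y t) = ⇑e := funext fun i => hπY t i
    rw [this]
    exact e.linearIndependent
  -- positivity along the path
  have hYpos : ∀ t, t ∈ Set.Icc (0:ℝ) 1 →
      ∀ v ∈ Submodule.span ℝ (Set.range (Y t)), v ≠ 0 → 0 < φ v v := by
    intro t ht v hv hvne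
    obtain ⟨c, hc⟩ := (mem_span_range_iff_exists_fun ℝ).1 hv
    set a : H := ∑ i, c i • E i with ha
    set b : H := ∑ i, c i • w i with hb
    set b' : H := ∑ i, c i • w' i with hb'
    have hvdec : v = a + ((1 - t) • b + t • b') := by
      rw [← hc, hYdef]
      simp only [smul_add, Finset.sum_add_distrib, ha, hb, hb', Finset.smul_sum]
      congr 1
      congr 1
      · exact Finset.sum_congr rfl fun i _ => smul_comm _ _ _
      · exact Finset.sum_congr rfl fun i _ => smul_comm _ _ _
    have hane : a ≠ 0 := by
      intro h0
      apply hvne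
      have hc0 : ∀ i, c i = 0 := Fintype.linearIndependent_iff.1 hEli c (ha ▸ h0)
      rw [← hc]
      simp [hc0]
    have ham : a ∈ Hplus := Submodule.sum_smul_mem Hplus c fun i _ => hEplus i
    have hbm : b ∈ Hminus := Submodule.sum_smul_mem Hminus c fun i _ => hwm i
    have hb'm : b' ∈ Hminus := Submodule.sum_smul_mem Hminus c fun i _ => hw'm i
    have hu : a + b ∈ P := by
      have h1 : a + b = ∑ i, c i • (E i + w i) := by
        simp [ha, hb, smul_add, Finset.sum_add_distrib]
      rw [h1]
      exact Submodule.sum_smul_mem P c fun i _ => hwP i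
    have hu' : a + b' ∈ P' := by
      have h1 : a + b' = ∑ i, c i • (E i + w' i) := by
        simp [ha, hb', smul_add, Finset.sum_add_distrib]
      rw [h1]
      exact Submodule.sum_smul_mem P' c fun i _ => hw'P i
    have hu0 : a + b ≠ 0 := by
      intro h
      have h2 : a = -b := eq_neg_of_add_eq_zero_left h
      have h3 : a ∈ Hminus := h2 ▸ Hminus.neg_mem hbm
      exact hane ((Submodule.disjoint_def.1 hcompl.disjoint) a ham h3)
    have hu'0 : a + b' ≠ 0 := by
      intro h
      have h2 : a = -b' := eq_neg_of_add_eq_zero_left h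
      have h3 : a ∈ Hminus := h2 ▸ Hminus.neg_mem hb'm
      exact hane ((Submodule.disjoint_def.1 hcompl.disjoint) a ham h3)
    have hab : φ a b = 0 := horth a ham b hbm
    have hba : φ b a = 0 := by rw [hφsymm b a]; exact hab
    have hab' : φ a b' = 0 := horth a ham b' hb'm
    have hb'a : φ b' a = 0 := by rw [hφsymm b' a]; exact hab'
    have hb'b : φ b' b = φ b b' := hφsymm b' b
    have hApos : 0 < φ a a + φ b b := by
      have h1 := hPpos _ hu hu0
      have hexp : φ (a + b) (a + b) = φ a a + φ b b := by
        simp only [map_add, LinearMap.add_apply, hab, hba]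
        ring
      linarith [hexp ▸ h1]
    have hA'pos : 0 < φ a a + φ b' b' := by
      have h1 := hP'pos _ hu' hu'0
      have hexp : φ (a + b') (a + b') = φ a a + φ b' b' := by
        simp only [map_add, LinearMap.add_apply, hab', hb'a]
        ring
      linarith [hexp ▸ h1]
    have hX : (φ b b') ^ 2 ≤ φ b b * φ b' b' := cs_neg φ hφsymm Hminus hnegdef hbm hb'm
    have hB : φ b b ≤ 0 := by
      rcases eq_or_ne b 0 with h | h
      · simp [h]
      · exact (hnegdef b hbm h).le
    have hB' : φ b' b' ≤ 0 := by
      rcases eq_or_ne b' 0 with h | h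
      · simp [h]
      · exact (hnegdef b' hb'm h).le
    have hvv : φ v v
        = φ a a + ((1 - t) ^ 2 * φ b b + 2 * (1 - t) * t * φ b b' + t ^ 2 * φ b' b') := by
      rw [hvdec]
      simp only [map_add, _root_.map_smul, LinearMap.add_apply, LinearMap.smul_apply,
        smul_eq_mul, hab, hba, hab', hb'a, hb'b]
      ring
    have h2X : φ b b + φ b' b' ≤ 2 * φ b b' := by
      nlinarith [hX, hB, hB', sq_nonneg (φ b b - φ b' b'), sq_nonneg (φ b b + φ b' b' - 2 * φ b b')]
    have htt : 0 ≤ t * (1 - t) := mul_nonneg ht.1 (by linarith [ht.2])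
    have key : 0 < φ a a + ((1 - t) * φ b b + t * φ b' b') := by
      rcases eq_or_lt_of_le ht.2 with h1 | h1
      · rw [h1]
        simp only [sub_self, zero_mul, one_mul, zero_add]
        linarith [hA'pos]
      · nlinarith [mul_pos (sub_pos.2 h1) hApos, mul_nonneg ht.1 hA'pos.le]
    rw [hvv]
    nlinarith [mul_le_mul_of_nonneg_left h2X htt, key]
  -- image tuples under g
  have hgYli : ∀ t, LinearIndependent ℝ (⇑g ∘ Y t) := fun t =>
    (hYli t).map' g.toLinearMap (LinearMap.ker_eq_bot.2 g.injective)
  have hgYpos : ∀ t, t ∈ Set.Icc (0:ℝ) 1 →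
      ∀ v ∈ Submodule.span ℝ (Set.range (⇑g ∘ Y t)), v ≠ 0 → 0 < φ v v := by
    intro t ht v hv hvne
    have hrg : Set.range (⇑g ∘ Y t) = ⇑(g.toLinearMap) '' Set.range (Y t) := by
      rw [Set.range_comp]; rfl
    rw [hrg, ← Submodule.map_span] at hv
    obtain ⟨v', hv', rfl⟩ := Submodule.mem_map.1 hv
    have hv'ne : v' ≠ 0 := by
      rintro rfl
      simp at hvne
    have h1 := hYpos t ht v' hv' hv'ne
    have h2 : φ (g.toLinearMap v') (g.toLinearMap v') = φ v' v' := hg v' v'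
    rw [h2]
    exact h1
  set f : ℝ → ℝ := fun t => (Matrix.of fun i j => φ (g (Y t i)) (Y t j)).det with hf
  have hfne : ∀ t ∈ Set.Icc (0:ℝ) 1, f t ≠ 0 := by
    intro t ht
    exact detne φ hφsymm p hp Hplus Hminus hcompl hplusdim hnegdef (⇑g ∘ Y t) (Y t)
      (hgYli t) (hYli t) (hgYpos t ht) (hYpos t ht)
  have hcont : Continuous f := by
    apply Continuous.matrix_det
    apply continuous_matrix
    intro i j
    simp only [hf, hYdef, Matrix.of_apply, map_add, _root_.map_smul, LinearMap.add_apply,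
      LinearMap.smul_apply, smul_eq_mul]
    fun_prop
  have hsub0 : ∀ i, Y 0 i ∈ Submodule.span ℝ (Set.range x) := by
    intro i
    rw [hxspan]
    have h1 : Y 0 i = E i + w i := by simp [hYdef]
    rw [h1]
    exact hwP i
  have hsub1 : ∀ i, Y 1 i ∈ Submodule.span ℝ (Set.range x') := by
    intro i
    rw [hx'span]
    have h1 : Y 1 i = E i + w' i := by simp [hYdef]
    rw [h1]
    exact hw'P i
  have h0 := sign_change φ g x (Y 0) (hYli 0) hsub0
  have h1 := sign_change φ g x' (Y 1) (hYli 1) hsub1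
  have hmid : Real.sign (f 0) = Real.sign (f 1) := sign_eq_of_cont f hcont hfne
  calc Real.sign (Matrix.det (Matrix.of fun i j => φ (g (x i)) (x j)))
      = Real.sign (f 0) := h0.symm
    _ = Real.sign (f 1) := hmid
    _ = Real.sign (Matrix.det (Matrix.of fun i j => φ (g (x' i)) (x' j))) := h1


end Main
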